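/- Let P and N be symmetric real n×n matrices, both solving the ARE, such that Δ = P − N is invertible. Set A₋ = A − BR⁻¹BᵀP and A₊ = A − BR⁻¹BᵀN, let M be the 2n×2n block matrix [[A, BR⁻¹Bᵀ], [Q, −Aᵀ]], and let T be the 2n×2n block matrix [[I, I], [−N, −P]]. Then T is invertible, its inverse is the block matrix [[Δ⁻¹P, Δ⁻¹], [−Δ⁻¹N, −Δ⁻¹]], and T⁻¹MT equals the block diagonal matrix [[A₊, 0], [0, A₋]]. -/

import Mathlib

open Matrix

/-- block diagonalization of the extremal matrix `M` by the matrix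
`T = [[I, I], [−N, −P]]`. -/
theorem block_diagonalization
    (n m : ℕ) (hn : 1 ≤ n) (hm : 1 ≤ m)
    (A : Matrix (Fin n) (Fin n) ℝ) (B : Matrix (Fin n) (Fin m) ℝ)
    (Q : Matrix (Fin n) (Fin n) ℝ) (hQ : Q.PosDef)
    (R : Matrix (Fin m) (Fin m) ℝ) (hR : R.PosDef)
    (P : Matrix (Fin n) (Fin n) ℝ) (hPsymm : Pᵀ = P)
    (hAREP : Aᵀ * P + P * A - P * B * R⁻¹ * Bᵀ * P = -Q)
    (N : Matrix (Fin n) (Fin n) ℝ) (hNsymm : Nᵀ = N)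
    (hAREN : Aᵀ * N + N * A - N * B * R⁻¹ * Bᵀ * N = -Q)
    (hΔ : IsUnit (P - N)) :
    IsUnit (Matrix.fromBlocks (1 : Matrix (Fin n) (Fin n) ℝ) 1 (-N) (-P)) ∧
    (Matrix.fromBlocks (1 : Matrix (Fin n) (Fin n) ℝ) 1 (-N) (-P))⁻¹
      = Matrix.fromBlocks ((P - N)⁻¹ * P) (P - N)⁻¹ (-((P - N)⁻¹ * N)) (-(P - N)⁻¹) ∧
    (Matrix.fromBlocks (1 : Matrix (Fin n) (Fin n) ℝ) 1 (-N) (-P))⁻¹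
        * Matrix.fromBlocks A (B * R⁻¹ * Bᵀ) Q (-Aᵀ)
        * Matrix.fromBlocks (1 : Matrix (Fin n) (Fin n) ℝ) 1 (-N) (-P)
      = Matrix.fromBlocks (A - B * R⁻¹ * Bᵀ * N) 0 0 (A - B * R⁻¹ * Bᵀ * P) := by
  have hdet : IsUnit (P - N).det := (Matrix.isUnit_iff_isUnit_det _).mp hΔ
  have h1 : (P - N)⁻¹ * (P - N) = 1 := Matrix.nonsing_inv_mul _ hdet
  set T := Matrix.fromBlocks (1 : Matrix (Fin n) (Fin n) ℝ) 1 (-N) (-P) with hT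
  set S := Matrix.fromBlocks ((P - N)⁻¹ * P) (P - N)⁻¹ (-((P - N)⁻¹ * N)) (-(P - N)⁻¹)
    with hS
  have hST : S * T = 1 := by
    rw [hS, hT, Matrix.fromBlocks_multiply, ← Matrix.fromBlocks_one,
      Matrix.fromBlocks_inj]
    refine ⟨?_, ?_, ?_, ?_⟩
    · rw [mul_one, mul_neg, ← sub_eq_add_neg, ← mul_sub, h1]
    · rw [mul_one, mul_neg, ← sub_eq_add_neg, ← mul_sub, sub_self, mul_zero]
    · rw [mul_one, neg_mul, mul_neg, neg_neg, neg_add_cancel]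
    · rw [mul_one, neg_mul, mul_neg, neg_neg, neg_add_eq_sub, ← mul_sub, h1]
  have hTunit : IsUnit T := (Matrix.isUnit_iff_isUnit_det _).mpr (Matrix.isUnit_det_of_left_inverse hST)
  have hTinv : T⁻¹ = S := Matrix.inv_eq_left_inv hST
  refine ⟨hTunit, hTinv, ?_⟩
  rw [hTinv]
  have hQN : Q = -(Aᵀ * N + N * A - N * B * R⁻¹ * Bᵀ * N) := by
    rw [hAREN, neg_neg]
  have hQP : Q = -(Aᵀ * P + P * A - P * B * R⁻¹ * Bᵀ * P) := by
    rw [hAREP, neg_neg]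
  have hMT : Matrix.fromBlocks A (B * R⁻¹ * Bᵀ) Q (-Aᵀ) * T
      = T * Matrix.fromBlocks (A - B * R⁻¹ * Bᵀ * N) 0 0 (A - B * R⁻¹ * Bᵀ * P) := by
    rw [hT, Matrix.fromBlocks_multiply, Matrix.fromBlocks_multiply,
      Matrix.fromBlocks_inj]
    refine ⟨?_, ?_, ?_, ?_⟩
    · noncomm_ring
    · noncomm_ring
    · rw [hQN]; noncomm_ring; simp only [Matrix.mul_assoc]
    · rw [hQP]; noncomm_ring; simp only [Matrix.mul_assoc]
  rw [mul_assoc, hMT, ← mul_assoc, hST, one_mul]
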